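/- Let η be a nonzero ±1-valued event sequence on [0,T]. Then r := ‖η‖_D is a positive integer and there exist ±1-valued event sequences η_0, η_1, …, η_r on [0,T] with η_0 identically zero, η_r = η, ‖η_k − η_{k−1}‖_D = 1 for every k ∈ {1, …, r}, and consequently ‖η‖_D = Σ_{k=1}^{r} ‖η_k − η_{k−1}‖_D. -/

import Mathlib

open Set Function Filter Classical

/-- The next SOD sampling time after time `s` for input `f`, threshold `θ`, on `[0,T]`:
the infimum of `{t ∈ (s,T] : |f t - f s| ≥ θ}` if this set is nonempty, `none` otherwise. -/
noncomputable def sodNext (T θ : ℝ) (f : ℝ → ℝ) (s : ℝ) : Option ℝ :=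
  if (∃ t ∈ Set.Ioc s T, θ ≤ |f t - f s|) then
    some (sInf {t | t ∈ Set.Ioc s T ∧ θ ≤ |f t - f s|})
  else none

/-- The `k`-th SOD sampling time (`t_0 = 0`), `none` if the recursion has stopped before `k`. -/
noncomputable def sodTime (T θ : ℝ) (f : ℝ → ℝ) : ℕ → Option ℝ
  | 0 => some 0
  | n + 1 => (sodTime T θ f n).bind (sodNext T θ f)

/-- The SOD output event sequence `Φ_θ(f)` : it takes the value `f t_k - f t_{k-1}` at
each sampling time `t_k`, `k ≥ 1`, and `0` elsewhere. -/
noncomputable def sodOut (T θ : ℝ) (f : ℝ → ℝ) : ℝ → ℝ := fun t =>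
  if h : ∃ k : ℕ, ∃ s : ℝ, sodTime T θ f k = some s ∧ sodNext T θ f s = some t
  then f t - f h.choose_spec.choose
  else 0

/-- Membership in `F[0,T]`: continuous on `[0,T]` with `f 0 = 0`. -/
def memF (T : ℝ) (f : ℝ → ℝ) : Prop :=
  ContinuousOn f (Set.Icc 0 T) ∧ f 0 = 0

/-- An event sequence on `[0,T]`: finitely supported with support in `[0,T]`. -/
def IsEventSeq (T : ℝ) (η : ℝ → ℝ) : Prop :=
  (Function.support η).Finite ∧ Function.support η ⊆ Set.Icc 0 T

/-- `η` is `±1`-valued on its support. -/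
def IsPM (η : ℝ → ℝ) : Prop :=
  ∀ t ∈ Function.support η, η t = 1 ∨ η t = -1

/-- Weyl's discrepancy norm `‖η‖_D = sup_{0 ≤ a ≤ b ≤ T} |Σ_{t ∈ [a,b]} η t|`. -/
noncomputable def discNorm (T : ℝ) (η : ℝ → ℝ) : ℝ :=
  sSup {x | ∃ a b : ℝ, 0 ≤ a ∧ a ≤ b ∧ b ≤ T ∧ x = |∑ᶠ t ∈ Set.Icc a b, η t|}

/-- Alexiewicz norm `‖η‖_A = sup_{a ∈ [0,T]} |Σ_{t ∈ [0,a]} η t|`. -/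
noncomputable def alexNorm (T : ℝ) (η : ℝ → ℝ) : ℝ :=
  sSup {x | ∃ a : ℝ, 0 ≤ a ∧ a ≤ T ∧ x = |∑ᶠ t ∈ Set.Icc 0 a, η t|}

/-- The values of `η` at consecutive support points alternate in sign. -/
def Alternating (η : ℝ → ℝ) : Prop :=
  ∀ s u : ℝ, s ∈ Function.support η → u ∈ Function.support η → s < u →
    (∀ t ∈ Function.support η, ¬ (s < t ∧ t < u)) → η s * η u < 0

/-- One `(+−)`-transcription step: erase a `+1` followed (with no support in between) by a `−1`. -/
def StepPM (η η' : ℝ → ℝ) : Prop :=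
  ∃ s u : ℝ, s < u ∧ η s = 1 ∧ η u = -1 ∧ (∀ t : ℝ, s < t → t < u → η t = 0) ∧
    η' = Function.update (Function.update η s 0) u 0

/-- One `(−+)`-transcription step: erase a `−1` followed (with no support in between) by a `+1`. -/
def StepMP (η η' : ℝ → ℝ) : Prop :=
  ∃ s u : ℝ, s < u ∧ η s = -1 ∧ η u = 1 ∧ (∀ t : ℝ, s < t → t < u → η t = 0) ∧
    η' = Function.update (Function.update η s 0) u 0

/-- `StepsN R n x y` : `y` is obtained from `x` by `n` successive `R`-steps. -/
def StepsN (R : (ℝ → ℝ) → (ℝ → ℝ) → Prop) : ℕ → (ℝ → ℝ) → (ℝ → ℝ) → Prop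
  | 0, x, y => x = y
  | n + 1, x, z => ∃ y, R x y ∧ StepsN R n y z

/-- Uniform distance `‖f − g‖_∞` over `[0,T]`. -/
noncomputable def unifDist (T : ℝ) (f g : ℝ → ℝ) : ℝ :=
  sSup {x | ∃ t ∈ Set.Icc 0 T, x = |f t - g t|}


open Classical in
noncomputable def sleZ (s : Finset ℝ) (g : ℝ → ℤ) (x : ℝ) : ℤ :=
  ∑ u ∈ s.filter (fun t => t ≤ x), g u

open Classical in
noncomputable def sltZ (s : Finset ℝ) (g : ℝ → ℤ) (x : ℝ) : ℤ :=
  ∑ u ∈ s.filter (fun t => t < x), g u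

lemma sleZ_eq_sltZ_add (s : Finset ℝ) (g : ℝ → ℤ) {t : ℝ} (ht : t ∈ s) :
    sleZ s g t = sltZ s g t + g t := by
  classical
  have h : s.filter (fun u => u ≤ t) = insert t (s.filter (fun u => u < t)) := by
    ext u
    simp only [Finset.mem_filter, Finset.mem_insert]
    constructor
    · rintro ⟨hus, hut⟩
      rcases eq_or_lt_of_le hut with h | h
      · exact Or.inl h
      · exact Or.inr ⟨hus, h⟩
    · rintro (rfl | ⟨hus, hut⟩)
      · exact ⟨ht, le_refl _⟩
      · exact ⟨hus, hut.le⟩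
  have hnot : t ∉ s.filter (fun u => u < t) := by simp
  rw [sleZ, h, Finset.sum_insert hnot, sltZ, add_comm]

lemma teleZ (s : Finset ℝ) (g : ℝ → ℤ) (F : ℤ → ℤ) :
    ∀ (n : ℕ) (a b : ℝ), a ≤ b →
      (s.filter (fun t => t ∈ Set.Icc a b)).card = n →
      ∑ t ∈ s.filter (fun t => t ∈ Set.Icc a b), (F (sleZ s g t) - F (sltZ s g t))
        = F (sleZ s g b) - F (sltZ s g a) := by
  classical
  intro n
  induction n with
  | zero =>
    intro a b hab hcard
    have hempty : s.filter (fun t => t ∈ Set.Icc a b) = ∅ := Finset.card_eq_zero.mp hcard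
    have heq : s.filter (fun t => t ≤ b) = s.filter (fun t => t < a) := by
      ext t
      simp only [Finset.mem_filter]
      constructor
      · rintro ⟨hts, htb⟩
        refine ⟨hts, ?_⟩
        by_contra h
        push_neg at h
        have : t ∈ s.filter (fun t => t ∈ Set.Icc a b) := by
          simp [hts, h, htb, Set.mem_Icc]
        rw [hempty] at this
        simp at this
      · rintro ⟨hts, hta⟩
        exact ⟨hts, hta.le.trans hab⟩
    rw [hempty]
    simp [sleZ, sltZ, heq]
  | succ n ih =>
    intro a b hab hcard
    have hne : (s.filter (fun t => t ∈ Set.Icc a b)).Nonempty := by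
      rw [← Finset.card_pos, hcard]; omega
    set u := (s.filter (fun t => t ∈ Set.Icc a b)).max' hne with hu
    have humem := (s.filter (fun t => t ∈ Set.Icc a b)).max'_mem hne
    rw [Finset.mem_filter, Set.mem_Icc] at humem
    obtain ⟨hus, hau, hub⟩ := humem
    have hmax : ∀ t ∈ s.filter (fun t => t ∈ Set.Icc a b), t ≤ u :=
      fun t ht => Finset.le_max' _ t ht
    have hsleb : sleZ s g b = sleZ s g u := by
      unfold sleZ
      congr 1
      ext t
      simp only [Finset.mem_filter]
      constructor
      · rintro ⟨hts, htb⟩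
        refine ⟨hts, ?_⟩
        rcases lt_or_ge t a with h | h
        · exact h.le.trans hau
        · exact hmax t (by simp [hts, Set.mem_Icc, h, htb])
      · rintro ⟨hts, htu⟩
        exact ⟨hts, htu.trans hub⟩
    by_cases hsub : (s.filter (fun t => a ≤ t ∧ t < u)).Nonempty
    · set b' := (s.filter (fun t => a ≤ t ∧ t < u)).max' hsub with hb'
      have hb'mem := (s.filter (fun t => a ≤ t ∧ t < u)).max'_mem hsub
      rw [Finset.mem_filter] at hb'mem
      obtain ⟨hb's, hab', hb'u⟩ := hb'mem
      have hsubmax : ∀ t ∈ s.filter (fun t => a ≤ t ∧ t < u), t ≤ b' :=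
        fun t ht => Finset.le_max' _ t ht
      have herase : s.filter (fun t => t ∈ Set.Icc a b')
          = (s.filter (fun t => t ∈ Set.Icc a b)).erase u := by
        ext t
        simp only [Finset.mem_filter, Finset.mem_erase, Set.mem_Icc]
        constructor
        · rintro ⟨hts, hat, htb'⟩
          have htu : t < u := lt_of_le_of_lt htb' hb'u
          exact ⟨htu.ne, hts, hat, (htu.le.trans hub)⟩
        · rintro ⟨htne, hts, hat, htb⟩
          have htu : t < u := lt_of_le_of_ne (hmax t (by simp [hts, Set.mem_Icc, hat, htb])) htne
          exact ⟨hts, hat, hsubmax t (by simp [hts, hat, htu])⟩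
      have hcard' : (s.filter (fun t => t ∈ Set.Icc a b')).card = n := by
        rw [herase, Finset.card_erase_of_mem (by simp [Set.mem_Icc, hus, hau, hub]; exact ⟨hus, hau, hub⟩), hcard]
        omega
      have hslt : sleZ s g b' = sltZ s g u := by
        unfold sleZ sltZ
        congr 1
        ext t
        simp only [Finset.mem_filter]
        constructor
        · rintro ⟨hts, htb'⟩
          exact ⟨hts, lt_of_le_of_lt htb' hb'u⟩
        · rintro ⟨hts, htu⟩
          refine ⟨hts, ?_⟩
          rcases lt_or_ge t a with h | h
          · exact le_of_lt (lt_of_lt_of_le h hab')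
          · exact hsubmax t (by simp [hts, h, htu])
      have hsum : ∑ t ∈ s.filter (fun t => t ∈ Set.Icc a b), (F (sleZ s g t) - F (sltZ s g t))
          = (∑ t ∈ (s.filter (fun t => t ∈ Set.Icc a b)).erase u,
              (F (sleZ s g t) - F (sltZ s g t))) + (F (sleZ s g u) - F (sltZ s g u)) := by
        rw [Finset.sum_erase_add _ _ (by simp [Set.mem_Icc, hus, hau, hub]; exact ⟨hus, hau, hub⟩)]
      rw [hsum, ← herase, ih a b' hab' hcard', hslt, hsleb]
      ring
    · -- filter Icc a b = {u}
      have hsingle : s.filter (fun t => t ∈ Set.Icc a b) = {u} := by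
        ext t
        simp only [Finset.mem_filter, Set.mem_Icc, Finset.mem_singleton]
        constructor
        · rintro ⟨hts, hat, htb⟩
          by_contra hne
          have htu : t < u := lt_of_le_of_ne (hmax t (by simp [hts, Set.mem_Icc, hat, htb])) hne
          exact hsub ⟨t, by simp [hts, hat, htu]⟩
        · rintro rfl
          exact ⟨hus, hau, hub⟩
      have hslta : sltZ s g a = sltZ s g u := by
        unfold sltZ
        congr 1
        ext t
        simp only [Finset.mem_filter]
        constructor
        · rintro ⟨hts, hta⟩
          exact ⟨hts, lt_of_lt_of_le hta hau⟩
        · rintro ⟨hts, htu⟩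
          refine ⟨hts, ?_⟩
          by_contra h
          push_neg at h
          exact hsub ⟨t, by simp [hts, h, htu]⟩
      rw [hsingle, Finset.sum_singleton, hsleb, hslta]

lemma sltZ_rep (s : Finset ℝ) (g : ℝ → ℤ) (x : ℝ) :
    sltZ s g x = 0 ∨ ∃ p ∈ s, sltZ s g x = sleZ s g p := by
  classical
  by_cases h : (s.filter (fun t => t < x)).Nonempty
  · right
    set p := (s.filter (fun t => t < x)).max' h with hp
    have hpmem := (s.filter (fun t => t < x)).max'_mem h
    rw [Finset.mem_filter] at hpmem
    refine ⟨p, hpmem.1, ?_⟩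
    unfold sltZ sleZ
    congr 1
    ext t
    simp only [Finset.mem_filter]
    constructor
    · rintro ⟨hts, htx⟩
      exact ⟨hts, Finset.le_max' _ t (by simp [hts, htx])⟩
    · rintro ⟨hts, htp⟩
      exact ⟨hts, lt_of_le_of_lt htp hpmem.2⟩
  · left
    rw [Finset.not_nonempty_iff_eq_empty] at h
    simp [sltZ, h]

lemma sleZ_rep (s : Finset ℝ) (g : ℝ → ℤ) (x : ℝ) :
    sleZ s g x = 0 ∨ ∃ p ∈ s, sleZ s g x = sleZ s g p := by
  classical
  by_cases h : (s.filter (fun t => t ≤ x)).Nonempty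
  · right
    set p := (s.filter (fun t => t ≤ x)).max' h with hp
    have hpmem := (s.filter (fun t => t ≤ x)).max'_mem h
    rw [Finset.mem_filter] at hpmem
    refine ⟨p, hpmem.1, ?_⟩
    unfold sleZ
    congr 1
    ext t
    simp only [Finset.mem_filter]
    constructor
    · rintro ⟨hts, htx⟩
      exact ⟨hts, Finset.le_max' _ t (by simp [hts, htx])⟩
    · rintro ⟨hts, htp⟩
      exact ⟨hts, htp.trans hpmem.2⟩
  · left
    rw [Finset.not_nonempty_iff_eq_empty] at h
    simp [sleZ, h]

lemma sltZ_zero (s : Finset ℝ) (g : ℝ → ℤ) (hs : ∀ t ∈ s, 0 ≤ t) :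
    sltZ s g 0 = 0 := by
  classical
  have : s.filter (fun t => t < (0:ℝ)) = ∅ := by
    rw [Finset.filter_eq_empty_iff]
    intro t ht
    simp only [not_lt]
    exact hs t ht
  simp [sltZ, this]

/-- Given `p ∈ s` which is not maximal-beyond, the least element of `s` above `p`
realizes `sltZ · = sleZ p`. -/
lemma sltZ_next (s : Finset ℝ) (g : ℝ → ℤ) {p : ℝ} (hp : p ∈ s)
    (h : (s.filter (fun t => p < t)).Nonempty) :
    sltZ s g ((s.filter (fun t => p < t)).min' h) = sleZ s g p := by
  classical
  set a := (s.filter (fun t => p < t)).min' h with ha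
  have hamem := (s.filter (fun t => p < t)).min'_mem h
  rw [Finset.mem_filter] at hamem
  unfold sltZ sleZ
  congr 1
  ext t
  simp only [Finset.mem_filter]
  constructor
  · rintro ⟨hts, hta⟩
    refine ⟨hts, ?_⟩
    by_contra hc
    push_neg at hc
    exact absurd (Finset.min'_le _ t (by simp [hts, hc])) (not_le.mpr hta)
  · rintro ⟨hts, htp⟩
    exact ⟨hts, lt_of_le_of_lt htp hamem.2⟩

lemma realizeZ (T : ℝ) (s : Finset ℝ) (g : ℝ → ℤ)
    (hsT : ∀ t ∈ s, 0 ≤ t ∧ t ≤ T) (hT : 0 ≤ T) (x y : ℤ) (hxy : x ≠ y)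
    (hx : x = 0 ∨ ∃ p ∈ s, x = sleZ s g p) (hy : y = 0 ∨ ∃ q ∈ s, y = sleZ s g q) :
    ∃ a b : ℝ, 0 ≤ a ∧ a ≤ b ∧ b ≤ T ∧
      ((sltZ s g a = x ∧ sleZ s g b = y) ∨ (sltZ s g a = y ∧ sleZ s g b = x)) := by
  classical
  have h0 : sltZ s g 0 = 0 := sltZ_zero s g (fun t ht => (hsT t ht).1)
  rcases hx with rfl | ⟨p, hp, rfl⟩
  · rcases hy with rfl | ⟨q, hq, rfl⟩
    · exact absurd rfl hxy
    · exact ⟨0, q, le_refl 0, (hsT q hq).1, (hsT q hq).2, Or.inl ⟨h0, rfl⟩⟩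
  · rcases hy with rfl | ⟨q, hq, rfl⟩
    · exact ⟨0, p, le_refl 0, (hsT p hp).1, (hsT p hp).2, Or.inr ⟨h0, rfl⟩⟩
    · have hpq : p ≠ q := by rintro rfl; exact hxy rfl
      rcases lt_or_gt_of_ne hpq with hlt | hlt
      · have hne : (s.filter (fun t => p < t)).Nonempty := ⟨q, by simp [hq, hlt]⟩
        set a := (s.filter (fun t => p < t)).min' hne with ha
        have hamem := (s.filter (fun t => p < t)).min'_mem hne
        rw [Finset.mem_filter] at hamem
        refine ⟨a, q, (hsT a hamem.1).1, Finset.min'_le _ q (by simp [hq, hlt]),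
          (hsT q hq).2, Or.inl ⟨sltZ_next s g hp hne, rfl⟩⟩
      · have hne : (s.filter (fun t => q < t)).Nonempty := ⟨p, by simp [hp, hlt]⟩
        set a := (s.filter (fun t => q < t)).min' hne with ha
        have hamem := (s.filter (fun t => q < t)).min'_mem hne
        rw [Finset.mem_filter] at hamem
        refine ⟨a, p, (hsT a hamem.1).1, Finset.min'_le _ p (by simp [hp, hlt]),
          (hsT p hp).2, Or.inr ⟨sltZ_next s g hq hne, rfl⟩⟩

/-- chain decomposition: for a nonzero ±1-valued event sequence `η`,
`r = ‖η‖_D` is a positive integer, and there is a chain `η_0 = 0, …, η_r = η` of ±1-valued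
event sequences with `‖η_k − η_{k−1}‖_D = 1`, so `‖η‖_D = Σ_{k=1}^r ‖η_k − η_{k−1}‖_D`. -/
theorem stmt3 (T : ℝ) (hT : 0 < T) (η : ℝ → ℝ)
    (hη : IsEventSeq T η) (hpm : IsPM η) (hne : η ≠ 0) :
    ∃ r : ℕ, 0 < r ∧ discNorm T η = (r : ℝ) ∧
      ∃ c : ℕ → (ℝ → ℝ), c 0 = 0 ∧ c r = η ∧
        (∀ k ≤ r, IsEventSeq T (c k) ∧ IsPM (c k)) ∧
        (∀ k, 1 ≤ k → k ≤ r → discNorm T (c k - c (k - 1)) = 1) ∧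
        discNorm T η = ∑ k ∈ Finset.Icc 1 r, discNorm T (c k - c (k - 1)) := by
  classical
  obtain ⟨hfin, hsubT⟩ := hη
  set s : Finset ℝ := hfin.toFinset with hsdef
  have hmems : ∀ t, t ∈ s ↔ η t ≠ 0 := fun t => by
    simp [hsdef, Set.Finite.mem_toFinset, Function.mem_support]
  have hsT : ∀ t ∈ s, 0 ≤ t ∧ t ≤ T := by
    intro t ht
    have h2 := hsubT ((hmems t).mp ht)
    exact ⟨h2.1, h2.2⟩
  set g : ℝ → ℤ := fun t => if η t = 1 then 1 else -1 with hgdef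
  have hg : ∀ t ∈ s, ((g t : ℤ) : ℝ) = η t ∧ (g t = 1 ∨ g t = -1) := by
    intro t ht
    rcases hpm t ((hmems t).mp ht) with h | h <;> simp [hgdef, h] <;> norm_num
  set V : Finset ℤ := insert 0 (s.image (sleZ s g)) with hVdef
  have hVne : V.Nonempty := ⟨0, by simp [hVdef]⟩
  set m : ℤ := V.min' hVne with hmdef
  set M : ℤ := V.max' hVne with hMdef
  have hrepV : ∀ z ∈ V, z = 0 ∨ ∃ p ∈ s, z = sleZ s g p := by
    intro z hz
    rcases Finset.mem_insert.mp hz with h | h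
    · exact Or.inl h
    · obtain ⟨p, hp, hpe⟩ := Finset.mem_image.mp h
      exact Or.inr ⟨p, hp, hpe.symm⟩
  have hsleV : ∀ x : ℝ, sleZ s g x ∈ V := by
    intro x
    rcases sleZ_rep s g x with h | ⟨p, hp, h⟩
    · rw [h]; simp [hVdef]
    · rw [h]; exact Finset.mem_insert_of_mem (Finset.mem_image_of_mem _ hp)
  have hsltV : ∀ x : ℝ, sltZ s g x ∈ V := by
    intro x
    rcases sltZ_rep s g x with h | ⟨p, hp, h⟩
    · rw [h]; simp [hVdef]
    · rw [h]; exact Finset.mem_insert_of_mem (Finset.mem_image_of_mem _ hp)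
  have hVb : ∀ z ∈ V, m ≤ z ∧ z ≤ M := fun z hz => ⟨Finset.min'_le _ z hz, Finset.le_max' _ z hz⟩
  have hmV : m ∈ V := Finset.min'_mem _ _
  have hMV : M ∈ V := Finset.max'_mem _ _
  -- r ≥ 1
  obtain ⟨t0, ht0⟩ : ∃ t, η t ≠ 0 := by
    by_contra h
    push_neg at h
    exact hne (funext fun t => h t)
  have ht0s : t0 ∈ s := (hmems t0).mpr ht0
  have hr1 : 1 ≤ M - m := by
    have h1 := sleZ_eq_sltZ_add s g ht0s
    have h2 := hVb _ (hsleV t0)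
    have h3 := hVb _ (hsltV t0)
    rcases (hg t0 ht0s).2 with h | h <;> omega
  set r : ℕ := (M - m).toNat with hrdef
  have hrcast : (r : ℤ) = M - m := Int.toNat_of_nonneg (by omega)
  have hrpos : 0 < r := by omega
  -- the generic weight function
  set wF : (ℤ → ℤ) → ℝ → ℝ :=
    fun F t => if t ∈ s then (((F (sleZ s g t) - F (sltZ s g t)) : ℤ) : ℝ) else 0 with hwF
  -- finsum over Icc computes by telescoping
  have hkey : ∀ (F : ℤ → ℤ) (a b : ℝ), a ≤ b →
      ∑ᶠ t ∈ Set.Icc a b, wF F t = (((F (sleZ s g b) - F (sltZ s g a)) : ℤ) : ℝ) := by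
    intro F a b hab
    have hconv : ∑ᶠ t ∈ Set.Icc a b, wF F t
        = ∑ t ∈ s.filter (fun t => t ∈ Set.Icc a b), wF F t := by
      apply finsum_mem_eq_sum_of_inter_support_eq
      ext t
      simp only [Set.mem_inter_iff, Function.mem_support, Finset.coe_filter, Set.mem_setOf_eq]
      constructor
      · rintro ⟨h1, h2⟩
        have hts : t ∈ s := by
          by_contra hc
          simp [hwF, hc] at h2
        exact ⟨⟨hts, h1⟩, h2⟩
      · rintro ⟨⟨_, h1⟩, h2⟩
        exact ⟨h1, h2⟩
    rw [hconv]
    have h2 : ∀ t ∈ s.filter (fun t => t ∈ Set.Icc a b),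
        wF F t = (((F (sleZ s g t) - F (sltZ s g t)) : ℤ) : ℝ) := by
      intro t ht
      simp [hwF, (Finset.mem_filter.mp ht).1]
    rw [Finset.sum_congr rfl h2, ← Int.cast_sum,
      teleZ s g F _ a b hab rfl]
  -- generic discrepancy norm evaluation
  have hdnorm : ∀ (F : ℤ → ℤ) (d : ℤ),
      (∀ x ∈ V, ∀ y ∈ V, F x - F y ≤ d) →
      (∃ x ∈ V, ∃ y ∈ V, x ≠ y ∧ F x - F y = d) →
      discNorm T (wF F) = (d : ℝ) := by
    intro F d hbd hex
    have hd0 : 0 ≤ d := by have := hbd 0 (by simp [hVdef]) 0 (by simp [hVdef]); omega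
    have hub : ∀ z ∈ {x | ∃ a b : ℝ, 0 ≤ a ∧ a ≤ b ∧ b ≤ T ∧
        x = |∑ᶠ t ∈ Set.Icc a b, wF F t|}, z ≤ (d : ℝ) := by
      rintro z ⟨a, b, ha, hab, hbT, rfl⟩
      rw [hkey F a b hab, ← Int.cast_abs]
      have h1 := hbd (sleZ s g b) (hsleV b) (sltZ s g a) (hsltV a)
      have h2 := hbd (sltZ s g a) (hsltV a) (sleZ s g b) (hsleV b)
      exact_mod_cast (abs_le.mpr ⟨by omega, h1⟩ :
        |F (sleZ s g b) - F (sltZ s g a)| ≤ d)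
    have hmem : (d : ℝ) ∈ {x | ∃ a b : ℝ, 0 ≤ a ∧ a ≤ b ∧ b ≤ T ∧
        x = |∑ᶠ t ∈ Set.Icc a b, wF F t|} := by
      obtain ⟨x, hxV, y, hyV, hxyne, hxy⟩ := hex
      obtain ⟨a, b, ha, hab, hbT, hcase⟩ :=
        realizeZ T s g hsT hT.le x y hxyne (hrepV x hxV) (hrepV y hyV)
      refine ⟨a, b, ha, hab, hbT, ?_⟩
      rw [hkey F a b hab, ← Int.cast_abs]
      rcases hcase with ⟨h1, h2⟩ | ⟨h1, h2⟩
      · rw [h1, h2]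
        have : |F y - F x| = d := by rw [abs_sub_comm, hxy, abs_of_nonneg hd0]
        exact_mod_cast this.symm
      · rw [h1, h2]
        have : |F x - F y| = d := by rw [hxy, abs_of_nonneg hd0]
        exact_mod_cast this.symm
    unfold discNorm
    exact le_antisymm (csSup_le ⟨(d : ℝ), hmem⟩ hub) (le_csSup ⟨(d : ℝ), hub⟩ hmem)
  -- η as a weight function
  have hηw : η = wF (fun x => x) := by
    funext t
    by_cases ht : t ∈ s
    · rw [hwF]
      simp only [ht, if_true, sleZ_eq_sltZ_add s g ht]
      rw [show sltZ s g t + g t - sltZ s g t = g t by ring]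
      exact ((hg t ht).1).symm
    · have : η t = 0 := by
        by_contra hc
        exact ht ((hmems t).mpr hc)
      simp [hwF, ht, this]
  -- the chain
  set c : ℕ → ℝ → ℝ := fun k => wF (fun x => max m (min x (m + (k : ℤ)))) with hcdef
  have hceq : ∀ k : ℕ, c k = wF (fun x => max m (min x (m + (k : ℤ)))) := fun k => rfl
  -- discNorm of η
  have hdη : discNorm T η = (r : ℝ) := by
    rw [hηw, hdnorm (fun x => x) (M - m)
      (fun x hx y hy => by
        have h1 := hVb x hx; have h2 := hVb y hy; show x - y ≤ M - m; omega)
      ⟨M, hMV, m, hmV, by omega, rfl⟩]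
    exact_mod_cast congrArg (fun z : ℤ => (z : ℝ)) hrcast.symm
  have hdiff : ∀ k : ℕ, 1 ≤ k → k ≤ r → discNorm T (c k - c (k - 1)) = 1 := by
    intro k hk1 hkr
    obtain ⟨k', rfl⟩ : ∃ k', k = k' + 1 := ⟨k - 1, by omega⟩
    have hdiffeq : c (k' + 1) - c (k' + 1 - 1) =
        wF (fun x => (max m (min x (m + ((k' + 1 : ℕ) : ℤ))) -
          max m (min x (m + (k' : ℤ))))) := by
      have h1 : k' + 1 - 1 = k' := rfl
      rw [h1]
      funext t
      by_cases ht : t ∈ s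
      · simp only [hcdef, hwF, Pi.sub_apply, ht, if_true]
        push_cast
        ring
      · simp [hcdef, hwF, ht]
    have hb : ∀ x ∈ V, ∀ y ∈ V,
        (max m (min x (m + ((k' + 1 : ℕ) : ℤ))) - max m (min x (m + (k' : ℤ)))) -
        (max m (min y (m + ((k' + 1 : ℕ) : ℤ))) - max m (min y (m + (k' : ℤ)))) ≤ 1 := by
      intro x hx y hy
      have h1 := hVb x hx
      have h2 := hVb y hy
      push_cast
      omega
    have he : ∃ x ∈ V, ∃ y ∈ V, x ≠ y ∧
        (max m (min x (m + ((k' + 1 : ℕ) : ℤ))) - max m (min x (m + (k' : ℤ)))) -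
        (max m (min y (m + ((k' + 1 : ℕ) : ℤ))) - max m (min y (m + (k' : ℤ)))) = 1 := by
      refine ⟨M, hMV, m, hmV, by omega, ?_⟩
      have hkr' : ((k' + 1 : ℕ) : ℤ) ≤ M - m := by
        rw [← hrcast]; exact_mod_cast hkr
      push_cast at hkr' ⊢
      omega
    rw [hdiffeq, hdnorm _ 1 hb he]
    norm_num
  refine ⟨r, hrpos, hdη, c, ?_, ?_, ?_, ?_, ?_⟩
  · -- c 0 = 0
    funext t
    by_cases ht : t ∈ s
    · simp only [hcdef, hwF, ht, if_true]
      norm_num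
    · simp [hcdef, hwF, ht]
  · -- c r = η
    rw [hηw]
    funext t
    by_cases ht : t ∈ s
    · simp only [hcdef, hwF, ht, if_true]
      have h1 := hVb _ (hsleV t)
      have h2 := hVb _ (hsltV t)
      congr 1
      omega
    · simp [hcdef, hwF, ht]
  · -- event sequence and PM
    intro k _
    have hsupp : Function.support (c k) ⊆ ↑s := by
      intro t ht
      rw [Function.mem_support] at ht
      have hts : t ∈ s := by
        by_contra hc
        exact ht (by simp [hcdef, hwF, hc])
      exact Finset.mem_coe.mpr hts
    have hsupp' : Function.support (c k) ⊆ Function.support η := by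
      intro t ht
      exact Function.mem_support.mpr ((hmems t).mp (hsupp ht))
    constructor
    · exact ⟨hfin.subset hsupp', hsupp'.trans hsubT⟩
    · intro t ht
      have hts : t ∈ s := hsupp ht
      have hne0 : c k t ≠ 0 := Function.mem_support.mp ht
      have hval : c k t = (((max m (min (sleZ s g t) (m + (k : ℤ))) -
          max m (min (sltZ s g t) (m + (k : ℤ)))) : ℤ) : ℝ) := by
        simp [hcdef, hwF, hts]
      have hz : (max m (min (sleZ s g t) (m + (k : ℤ))) -
          max m (min (sltZ s g t) (m + (k : ℤ))) : ℤ) ≠ 0 := by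
        intro hzz
        rw [hval, hzz] at hne0
        simp at hne0
      have hstep := sleZ_eq_sltZ_add s g hts
      have hpm1 : max m (min (sleZ s g t) (m + (k : ℤ))) -
          max m (min (sltZ s g t) (m + (k : ℤ))) = 1 ∨
          max m (min (sleZ s g t) (m + (k : ℤ))) -
          max m (min (sltZ s g t) (m + (k : ℤ))) = -1 := by
        rcases (hg t hts).2 with h | h <;> omega
      rw [hval]
      rcases hpm1 with h | h <;> rw [h] <;> simp
  · exact hdiff
  · -- the sum identity
    have hsum : ∀ k ∈ Finset.Icc 1 r, discNorm T (c k - c (k - 1)) = 1 := by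
      intro k hk
      rw [Finset.mem_Icc] at hk
      exact hdiff k hk.1 hk.2
    rw [Finset.sum_congr rfl hsum, Finset.sum_const, Nat.card_Icc, hdη]
    have hrr : r + 1 - 1 = r := by omega
    rw [hrr, nsmul_eq_mul, mul_one]
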